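/- Let G be a group, N ⊴ G of finite index with A = G/N, and L an irreducible N-representation over an algebraically closed field k with full stabilizer and associated twisted group algebra 𝒜 of dimension |A|. Then there is an isomorphism of k-algebras End_G(Ind_N^G(L)) ≅ 𝒜^{op}. -/

import Mathlib

set_option synthInstance.maxHeartbeats 1000000

section CliffordDefs

variable {k G V : Type*} [Field k] [Group G] [AddCommGroup V] [Module k V]

/-- A `k`-submodule `W` is stable under the elements of `S` acting through `ρ`. -/
def repStable (ρ : Representation k G V) (S : Set G) (W : Submodule k V) : Prop :=
  ∀ g ∈ S, ∀ v ∈ W, ρ g v ∈ W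

/-- The representation `ρ` is irreducible (simple). -/
def repIrreducible (ρ : Representation k G V) : Prop :=
  Nontrivial V ∧ ∀ W : Submodule k V, repStable ρ Set.univ W → W = ⊥ ∨ W = ⊤

/-- The carrier of the induced representation `Ind_H^G V`: functions `f : G → V`
with `f (g * h) = ρ h⁻¹ (f g)` for `h ∈ H`. -/
def indCar (H : Subgroup G) (ρ : Representation k H V) : Submodule k (G → V) where
  carrier := {f | ∀ (g : G) (h : H), f (g * ↑h) = ρ h⁻¹ (f g)}
  add_mem' := by
    intro f₁ f₂ h₁ h₂ g h
    simp [h₁ g h, h₂ g h]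
  zero_mem' := by intro g h; simp
  smul_mem' := by
    intro c f hf g h
    simp [hf g h]

/-- The induced representation of `G` on `indCar H ρ`, given by `(g • f) x = f (g⁻¹ * x)`. -/
def indRep (H : Subgroup G) (ρ : Representation k H V) : Representation k G (indCar H ρ) where
  toFun g :=
    { toFun := fun f => ⟨fun x => (f : G → V) (g⁻¹ * x), by
        intro x h
        show (f : G → V) (g⁻¹ * (x * ↑h)) = ρ h⁻¹ ((f : G → V) (g⁻¹ * x))
        rw [← mul_assoc]
        exact f.2 (g⁻¹ * x) h⟩
      map_add' := by intro f₁ f₂; ext x; simp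
      map_smul' := by intro c f; ext x; simp }
  map_one' := by ext f x; simp
  map_mul' := by intro g₁ g₂; ext f x; simp [mul_assoc]

end CliffordDefs

namespace CliffordAux

open scoped Classical

variable {k G V : Type*} [Field k] [Group G] [AddCommGroup V] [Module k V]
variable (N : Subgroup G) (ρ : Representation k N V)

/-- Schur's lemma for `repIrreducible`. -/
theorem schur [IsAlgClosed k] [FiniteDimensional k V] (hirr : repIrreducible ρ)
    (T : V →ₗ[k] V) (hT : ∀ (n : N) (v : V), T (ρ n v) = ρ n (T v)) :
    ∃ μ : k, ∀ v, T v = μ • v := by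
  have : Nontrivial V := hirr.1
  obtain ⟨μ, hμ⟩ := Module.End.exists_eigenvalue T
  refine ⟨μ, fun v => ?_⟩
  have hstab : repStable ρ Set.univ (Module.End.eigenspace T μ) := by
    intro g _ v hv
    rw [Module.End.mem_eigenspace_iff] at hv ⊢
    rw [hT, hv, map_smul]
  have hW : Module.End.eigenspace T μ = ⊤ := by
    rcases hirr.2 (Module.End.eigenspace T μ) hstab with h | h
    · exact absurd h hμ
    · exact h
  have : v ∈ Module.End.eigenspace T μ := hW ▸ Submodule.mem_top
  exact Module.End.mem_eigenspace_iff.mp this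

/-- evaluation at 1 -/
def ev1 : indCar N ρ →ₗ[k] V where
  toFun f := (f : G → V) 1
  map_add' f g := rfl
  map_smul' c f := rfl

lemma indCar_prop (f : indCar N ρ) (g : G) (h : N) :
    (f : G → V) (g * ↑h) = ρ h⁻¹ ((f : G → V) g) := f.2 g h

lemma indRep_apply (g : G) (f : indCar N ρ) (x : G) :
    ((indRep N ρ g f : indCar N ρ) : G → V) x = (f : G → V) (g⁻¹ * x) := rfl

/-- basis functions supported on `N` -/
noncomputable def fV : V →ₗ[k] indCar N ρ where
  toFun v := ⟨fun g => if h : g ∈ N then ρ (⟨g, h⟩ : N)⁻¹ v else 0, by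
    intro g h
    by_cases hg : g ∈ N
    · have hgh : g * ↑h ∈ N := N.mul_mem hg h.2
      simp only [dif_pos hg, dif_pos hgh]
      have e1 : (⟨g * ↑h, hgh⟩ : N) = ⟨g, hg⟩ * h := rfl
      rw [e1, mul_inv_rev, map_mul, Module.End.mul_apply]
    · have hgh : ¬ (g * ↑h ∈ N) := by
        intro hc
        have := N.mul_mem hc (N.inv_mem h.2)
        simp only [mul_assoc, mul_inv_cancel, mul_one] at this
        exact hg this
      simp only [dif_neg hg, dif_neg hgh, map_zero]⟩
  map_add' v w := by
    apply Subtype.ext; funext g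
    show (if h : g ∈ N then ρ (⟨g, h⟩ : N)⁻¹ (v + w) else 0) = _
    by_cases hg : g ∈ N
    · simp [dif_pos hg]
    · simp [dif_neg hg]
  map_smul' c v := by
    apply Subtype.ext; funext g
    show (if h : g ∈ N then ρ (⟨g, h⟩ : N)⁻¹ (c • v) else 0) = _
    by_cases hg : g ∈ N
    · simp [dif_pos hg]
    · simp [dif_neg hg]

lemma fV_apply (v : V) (g : G) :
    ((fV N ρ v : indCar N ρ) : G → V) g = if h : g ∈ N then ρ (⟨g, h⟩ : N)⁻¹ v else 0 := rfl

lemma fV_one (v : V) : ((fV N ρ v : indCar N ρ) : G → V) 1 = v := by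
  rw [fV_apply, dif_pos N.one_mem]
  have : (⟨(1 : G), N.one_mem⟩ : N) = 1 := rfl
  rw [this, inv_one, map_one, Module.End.one_apply]

lemma fV_rho (n : N) (v : V) : fV N ρ (ρ n v) = indRep N ρ (↑n) (fV N ρ v) := by
  apply Subtype.ext; funext g
  rw [indRep_apply, fV_apply, fV_apply]
  by_cases hg : g ∈ N
  · have hg' : (↑n)⁻¹ * g ∈ N := N.mul_mem (N.inv_mem n.2) hg
    rw [dif_pos hg, dif_pos hg']
    have e1 : (⟨(↑n)⁻¹ * g, hg'⟩ : N)⁻¹ = (⟨g, hg⟩ : N)⁻¹ * n := by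
      apply Subtype.ext
      simp [mul_inv_rev]
    rw [e1, map_mul, Module.End.mul_apply]
  · have hg' : ¬ ((↑n)⁻¹ * g ∈ N) := by
      intro hc
      have := N.mul_mem n.2 hc
      rw [← mul_assoc, mul_inv_cancel, one_mul] at this
      exact hg this
    rw [dif_neg hg, dif_neg hg']

variable [N.Normal] [Fintype (G ⧸ N)]

lemma mk_iota {ι : G ⧸ N → G} (hι : ∀ a, QuotientGroup.mk' N (ι a) = a) (a : G ⧸ N) :
    (↑(ι a) : G ⧸ N) = a := hι a

lemma mem_N_iff (g : G) : g ∈ N ↔ (↑g : G ⧸ N) = 1 := (QuotientGroup.eq_one_iff g).symm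

lemma decompose {ι : G ⧸ N → G} (hι : ∀ a, QuotientGroup.mk' N (ι a) = a) (f : indCar N ρ) :
    f = ∑ b : G ⧸ N, indRep N ρ (ι b) (fV N ρ ((f : G → V) (ι b))) := by
  apply Subtype.ext; funext g
  have hcoe : ((∑ b : G ⧸ N, indRep N ρ (ι b) (fV N ρ ((f : G → V) (ι b))) : indCar N ρ) : G → V) g
      = ∑ b : G ⧸ N, ((indRep N ρ (ι b) (fV N ρ ((f : G → V) (ι b))) : indCar N ρ) : G → V) g := by
    rw [AddSubmonoidClass.coe_finset_sum, Finset.sum_apply]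
  rw [hcoe]
  have hterm : ∀ b : G ⧸ N,
      ((indRep N ρ (ι b) (fV N ρ ((f : G → V) (ι b))) : indCar N ρ) : G → V) g
      = if h : (ι b)⁻¹ * g ∈ N then ρ (⟨(ι b)⁻¹ * g, h⟩ : N)⁻¹ ((f : G → V) (ι b)) else 0 := by
    intro b
    rw [indRep_apply, fV_apply]
  rw [Finset.sum_congr rfl (fun b _ => hterm b)]
  rw [Finset.sum_eq_single ((g : G ⧸ N))]
  · have hmem : (ι ((g : G ⧸ N)))⁻¹ * g ∈ N := by
      rw [mem_N_iff, QuotientGroup.mk_mul, QuotientGroup.mk_inv, mk_iota N hι, inv_mul_cancel]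
    rw [dif_pos hmem]
    have := f.2 (ι ((g : G ⧸ N))) ⟨(ι ((g : G ⧸ N)))⁻¹ * g, hmem⟩
    have e1 : ι ((g : G ⧸ N)) * ((ι ((g : G ⧸ N)))⁻¹ * g) = g := by group
    rw [e1] at this
    exact this
  · intro b _ hb
    have hmem : ¬ ((ι b)⁻¹ * g ∈ N) := by
      rw [mem_N_iff, QuotientGroup.mk_mul, QuotientGroup.mk_inv, mk_iota N hι]
      intro hc
      apply hb
      rw [inv_mul_eq_one] at hc
      exact hc
    rw [dif_neg hmem]
  · intro hg
    exact absurd (Finset.mem_univ _) hg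

variable (ι : G ⧸ N → G) (θ : G ⧸ N → (V ≃ₗ[k] V))

/-- The right translation operators. -/
noncomputable def Rmap
    (hθ' : ∀ (a : G ⧸ N) (n : N) (v : V) (hm : (ι a)⁻¹ * ↑n * ι a ∈ N),
      θ a (ρ n v) = ρ ⟨(ι a)⁻¹ * ↑n * ι a, hm⟩ (θ a v))
    (a : G ⧸ N) : Module.End k (indCar N ρ) where
  toFun f := ⟨fun x => (θ a).symm ((f : G → V) (x * ι a)), by
    intro g h
    show (θ a).symm ((f : G → V) (g * ↑h * ι a)) = ρ h⁻¹ ((θ a).symm ((f : G → V) (g * ι a)))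
    have hm : (ι a)⁻¹ * ↑h * ι a ∈ N := by
      have := ‹N.Normal›.conj_mem _ h.2 (ι a)⁻¹
      simpa using this
    have e1 : g * ↑h * ι a = (g * ι a) * ↑(⟨(ι a)⁻¹ * ↑h * ι a, hm⟩ : N) := by
      show g * ↑h * ι a = (g * ι a) * ((ι a)⁻¹ * ↑h * ι a)
      simp only [mul_assoc, mul_inv_cancel_left]
    rw [e1, indCar_prop]
    set w := (f : G → V) (g * ι a) with hw
    have hm2 : (ι a)⁻¹ * ↑(h⁻¹) * ι a ∈ N := by
      have := ‹N.Normal›.conj_mem _ (h⁻¹).2 (ι a)⁻¹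
      simpa using this
    have hkey := hθ' a h⁻¹ ((θ a).symm w) hm2
    have em : (⟨(ι a)⁻¹ * ↑(h⁻¹) * ι a, hm2⟩ : N) = (⟨(ι a)⁻¹ * ↑h * ι a, hm⟩ : N)⁻¹ := by
      apply Subtype.ext
      show (ι a)⁻¹ * ↑(h⁻¹) * ι a = ((ι a)⁻¹ * ↑h * ι a)⁻¹
      push_cast
      simp only [mul_inv_rev, inv_inv, mul_assoc]
    rw [em, (θ a).apply_symm_apply] at hkey
    rw [← hkey, (θ a).symm_apply_apply]⟩
  map_add' f g := by
    apply Subtype.ext; funext x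
    show (θ a).symm (((f + g : indCar N ρ) : G → V) (x * ι a)) = _
    simp
  map_smul' c f := by
    apply Subtype.ext; funext x
    show (θ a).symm (((c • f : indCar N ρ) : G → V) (x * ι a)) = _
    simp

variable (α : G ⧸ N → G ⧸ N → kˣ)

section WithHyps

variable (hθ' : ∀ (a : G ⧸ N) (n : N) (v : V) (hm : (ι a)⁻¹ * ↑n * ι a ∈ N),
      θ a (ρ n v) = ρ ⟨(ι a)⁻¹ * ↑n * ι a, hm⟩ (θ a v))
variable (hα' : ∀ (a b : G ⧸ N) (v : V) (hm : (ι (a * b))⁻¹ * ι a * ι b ∈ N),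
      ρ ⟨(ι (a * b))⁻¹ * ι a * ι b, hm⟩ (θ b (θ a v)) = (α a b : k) • θ (a * b) v)
variable (hι : ∀ a, QuotientGroup.mk' N (ι a) = a) (hι1 : ι 1 = 1)
variable (hθ1 : θ 1 = LinearEquiv.refl k V)

include hι in
lemma iota_mem (a b : G ⧸ N) : (ι (a * b))⁻¹ * ι a * ι b ∈ N := by
  rw [mem_N_iff, QuotientGroup.mk_mul, QuotientGroup.mk_mul, QuotientGroup.mk_inv,
    mk_iota N hι, mk_iota N hι, mk_iota N hι]
  group

lemma rho_inv_apply (m : N) (w : V) : ρ m (ρ m⁻¹ w) = w := by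
  rw [← Module.End.mul_apply, ← map_mul, mul_inv_cancel, map_one, Module.End.one_apply]

lemma rho_inv_apply' (m : N) (w : V) : ρ m⁻¹ (ρ m w) = w := by
  rw [← Module.End.mul_apply, ← map_mul, inv_mul_cancel, map_one, Module.End.one_apply]

lemma Rmap_coe (a : G ⧸ N) (f : indCar N ρ) (x : G) :
    ((Rmap N ρ ι θ hθ' a f : indCar N ρ) : G → V) x = (θ a).symm ((f : G → V) (x * ι a)) := rfl

lemma Rmap_mem (a : G ⧸ N) :
    Rmap N ρ ι θ hθ' a ∈ Subalgebra.centralizer k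
      (Set.range (⇑(indRep N ρ)) : Set (Module.End k (indCar N ρ))) := by
  rw [Subalgebra.mem_centralizer_iff]
  rintro T ⟨g, rfl⟩
  apply LinearMap.ext; intro f
  apply Subtype.ext; funext x
  simp only [Module.End.mul_apply]
  rw [indRep_apply, Rmap_coe, Rmap_coe, indRep_apply, mul_assoc]

include hι1 hθ1 in
lemma Rmap_one : Rmap N ρ ι θ hθ' 1 = 1 := by
  apply LinearMap.ext; intro f
  apply Subtype.ext; funext x
  rw [Rmap_coe, hι1, hθ1, mul_one]
  rfl

include hα' hι in
lemma Rmap_comp (a b : G ⧸ N) :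
    Rmap N ρ ι θ hθ' a * Rmap N ρ ι θ hθ' b
      = ((α a b : k)⁻¹) • Rmap N ρ ι θ hθ' (a * b) := by
  apply LinearMap.ext; intro f
  apply Subtype.ext; funext x
  simp only [Module.End.mul_apply, LinearMap.smul_apply, SetLike.val_smul, Pi.smul_apply]
  rw [Rmap_coe, Rmap_coe, Rmap_coe]
  have hm : (ι (a * b))⁻¹ * ι a * ι b ∈ N := iota_mem N ι hι a b
  set m : N := ⟨(ι (a * b))⁻¹ * ι a * ι b, hm⟩ with hmdef
  have e1 : x * ι a * ι b = (x * ι (a * b)) * ↑m := by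
    show _ = x * ι (a * b) * ((ι (a * b))⁻¹ * ι a * ι b)
    group
  rw [e1, indCar_prop]
  set w := (f : G → V) (x * ι (a * b)) with hwdef
  have hkey := hα' a b ((θ a).symm ((θ b).symm (ρ m⁻¹ w))) hm
  rw [LinearEquiv.apply_symm_apply, LinearEquiv.apply_symm_apply] at hkey
  rw [rho_inv_apply] at hkey
  have h2 : (α a b : k)⁻¹ • w = θ (a * b) ((θ a).symm ((θ b).symm (ρ m⁻¹ w))) := by
    conv_lhs => rw [hkey]
    rw [smul_smul, inv_mul_cancel₀ (Units.ne_zero (α a b)), one_smul]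
  have h3 := congrArg (θ (a * b)).symm h2.symm
  rw [LinearEquiv.symm_apply_apply, map_smul] at h3
  exact h3

lemma scalar_cancel (hV : Nontrivial V) {r s : k} (h : ∀ v : V, r • v = s • v) : r = s := by
  obtain ⟨v, hv⟩ := exists_ne (0 : V)
  have h2 : (r - s) • v = 0 := by rw [sub_smul, h v, sub_self]
  rcases smul_eq_zero.mp h2 with h3 | h3
  · exact sub_eq_zero.mp h3
  · exact absurd h3 hv

include hα' hι hι1 hθ1 in
lemma alpha_one_right (hV : Nontrivial V) (a : G ⧸ N) : (α a 1 : k) = 1 := by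
  refine (scalar_cancel hV fun w => ?_).symm
  set v := (θ a).symm w with hv
  have hm : (ι (a * 1))⁻¹ * ι a * ι 1 ∈ N := iota_mem N ι hι a 1
  have hkey := hα' a 1 v hm
  have em : (⟨(ι (a * 1))⁻¹ * ι a * ι 1, hm⟩ : N) = 1 := by
    apply Subtype.ext
    show (ι (a * 1))⁻¹ * ι a * ι 1 = 1
    rw [mul_one, hι1, mul_one, inv_mul_cancel]
  rw [em, map_one, Module.End.one_apply, hθ1] at hkey
  simp only [LinearEquiv.refl_apply, mul_one] at hkey
  rw [hv, LinearEquiv.apply_symm_apply] at hkey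
  rw [one_smul]
  exact hkey

include hα' hι hι1 hθ1 in
lemma alpha_one_left (hV : Nontrivial V) (b : G ⧸ N) : (α 1 b : k) = 1 := by
  refine (scalar_cancel hV fun w => ?_).symm
  set v := (θ b).symm w with hv
  have hm : (ι (1 * b))⁻¹ * ι 1 * ι b ∈ N := iota_mem N ι hι 1 b
  have hkey := hα' 1 b v hm
  have em : (⟨(ι (1 * b))⁻¹ * ι 1 * ι b, hm⟩ : N) = 1 := by
    apply Subtype.ext
    show (ι (1 * b))⁻¹ * ι 1 * ι b = 1
    rw [one_mul, hι1, mul_one, inv_mul_cancel]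
  rw [em, map_one, Module.End.one_apply, hθ1] at hkey
  simp only [LinearEquiv.refl_apply, one_mul] at hkey
  rw [hv, LinearEquiv.apply_symm_apply] at hkey
  rw [one_smul]
  exact hkey

include hθ' hα' hι in
lemma cocycle (hV : Nontrivial V) (a b c : G ⧸ N) :
    (α a b : k) * (α (a * b) c : k) = (α b c : k) * (α a (b * c) : k) := by
  have hm1 : (ι (a * b))⁻¹ * ι a * ι b ∈ N := iota_mem N ι hι a b
  have hm2 : (ι (a * b * c))⁻¹ * ι (a * b) * ι c ∈ N := iota_mem N ι hι (a * b) c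
  have hm3 : (ι (b * c))⁻¹ * ι b * ι c ∈ N := iota_mem N ι hι b c
  have hm4 : (ι (a * (b * c)))⁻¹ * ι a * ι (b * c) ∈ N := iota_mem N ι hι a (b * c)
  set m1 : N := ⟨(ι (a * b))⁻¹ * ι a * ι b, hm1⟩ with hm1def
  set m2 : N := ⟨(ι (a * b * c))⁻¹ * ι (a * b) * ι c, hm2⟩ with hm2def
  set m3 : N := ⟨(ι (b * c))⁻¹ * ι b * ι c, hm3⟩ with hm3def
  set m4 : N := ⟨(ι (a * (b * c)))⁻¹ * ι a * ι (b * c), hm4⟩ with hm4def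
  have hn1 : (ι c)⁻¹ * ↑(m1⁻¹) * ι c ∈ N := by
    have := ‹N.Normal›.conj_mem _ (m1⁻¹).2 (ι c)⁻¹
    simpa using this
  set n1 : N := ⟨(ι c)⁻¹ * ↑(m1⁻¹) * ι c, hn1⟩ with hn1def
  have main : ∀ v : V,
      ((α a b : k) * (α (a * b) c : k)) • (ρ (n1 * m2⁻¹)) (θ (a * b * c) v)
        = ((α b c : k) * (α a (b * c) : k)) • (ρ (n1 * m2⁻¹)) (θ (a * b * c) v) := by
    intro v
    -- left side
    have h1 := hα' a b v hm1
    have h1' : θ b (θ a v) = (α a b : k) • (ρ m1⁻¹) (θ (a * b) v) := by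
      have := congrArg (ρ m1⁻¹) h1
      rw [rho_inv_apply', map_smul] at this
      exact this
    have h2 := hα' (a * b) c v hm2
    have h2' : θ c (θ (a * b) v) = (α (a * b) c : k) • (ρ m2⁻¹) (θ (a * b * c) v) := by
      have := congrArg (ρ m2⁻¹) h2
      rw [rho_inv_apply', map_smul] at this
      exact this
    have h3 := hα' b c (θ a v) hm3
    have h3' : θ c (θ b (θ a v)) = (α b c : k) • (ρ m3⁻¹) (θ (b * c) (θ a v)) := by
      have := congrArg (ρ m3⁻¹) h3
      rw [rho_inv_apply', map_smul] at this
      exact this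
    have h4 := hα' a (b * c) v hm4
    have h4' : θ (b * c) (θ a v) = (α a (b * c) : k) • (ρ m4⁻¹) (θ (a * (b * c)) v) := by
      have := congrArg (ρ m4⁻¹) h4
      rw [rho_inv_apply', map_smul] at this
      exact this
    have hth := hθ' c m1⁻¹ (θ (a * b) v) hn1
    -- LHS expansion
    have eL : θ c (θ b (θ a v))
        = ((α a b : k) * (α (a * b) c : k)) • (ρ (n1 * m2⁻¹)) (θ (a * b * c) v) := by
      rw [h1', map_smul, hth, h2', map_smul, smul_smul, map_mul, Module.End.mul_apply]
    -- RHS expansion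
    have eR : θ c (θ b (θ a v))
        = ((α b c : k) * (α a (b * c) : k)) • (ρ (m3⁻¹ * m4⁻¹)) (θ (a * (b * c)) v) := by
      rw [h3', h4', map_smul, smul_smul, map_mul, Module.End.mul_apply]
    have egrp : (n1 * m2⁻¹ : N) = m3⁻¹ * m4⁻¹ := by
      apply Subtype.ext
      show (ι c)⁻¹ * ((ι (a * b))⁻¹ * ι a * ι b)⁻¹ * ι c * ((ι (a * b * c))⁻¹ * ι (a * b) * ι c)⁻¹
          = ((ι (b * c))⁻¹ * ι b * ι c)⁻¹ * ((ι (a * (b * c)))⁻¹ * ι a * ι (b * c))⁻¹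
      rw [show a * (b * c) = a * b * c from (mul_assoc a b c).symm]
      group
    rw [← eL, eR, egrp, show a * (b * c) = a * b * c from (mul_assoc a b c).symm]
  apply scalar_cancel hV
  intro w
  have := main ((θ (a * b * c)).symm ((ρ (n1 * m2⁻¹)⁻¹) w))
  rw [LinearEquiv.apply_symm_apply, rho_inv_apply] at this
  exact this

include hθ' hα' hι hι1 hθ1 in
lemma key_scalar (hV : Nontrivial V) (a b : G ⧸ N) :
    (α a b : k) * (α (a * b) (a * b)⁻¹ : k)
      = (α b b⁻¹ : k) * (α a a⁻¹ : k) * ((α b⁻¹ a⁻¹ : k))⁻¹ := by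
  have h1 := cocycle N ρ ι θ α hθ' hα' hι hV a b (b⁻¹ * a⁻¹)
  have h2 := cocycle N ρ ι θ α hθ' hα' hι hV b b⁻¹ a⁻¹
  rw [show b * (b⁻¹ * a⁻¹) = a⁻¹ by group] at h1
  rw [show b * b⁻¹ = (1 : G ⧸ N) by group] at h2
  rw [alpha_one_left N ρ ι θ α hα' hι hι1 hθ1 hV, mul_one] at h2
  rw [show (a * b)⁻¹ = b⁻¹ * a⁻¹ by group] at *
  rw [h1, h2]
  field_simp

/-- The candidate isomorphism, on the level of endomorphisms. -/
noncomputable def Emap (x : (G ⧸ N) → k) : Module.End k (indCar N ρ) :=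
  ∑ a : G ⧸ N, (x a * (α a a⁻¹ : k)) • Rmap N ρ ι θ hθ' a⁻¹

lemma Emap_mem (x : (G ⧸ N) → k) :
    Emap N ρ ι θ α hθ' x ∈ Subalgebra.centralizer k
      (Set.range (⇑(indRep N ρ)) : Set (Module.End k (indCar N ρ))) := by
  apply sum_mem
  intro a _
  exact Subalgebra.smul_mem _ (Rmap_mem N ρ ι θ hθ' a⁻¹) _

lemma Emap_add (x y : (G ⧸ N) → k) :
    Emap N ρ ι θ α hθ' (x + y) = Emap N ρ ι θ α hθ' x + Emap N ρ ι θ α hθ' y := by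
  simp only [Emap, Pi.add_apply, add_mul, add_smul, Finset.sum_add_distrib]

lemma Emap_smul (c : k) (x : (G ⧸ N) → k) :
    Emap N ρ ι θ α hθ' (c • x) = c • Emap N ρ ι θ α hθ' x := by
  simp only [Emap, Pi.smul_apply, smul_eq_mul, Finset.smul_sum, smul_smul, mul_assoc]

include hι in
lemma Emap_on_basis (x : (G ⧸ N) → k) (b : G ⧸ N) (v : V) :
    ((Emap N ρ ι θ α hθ' x (indRep N ρ (ι b) (fV N ρ v)) : indCar N ρ) : G → V) 1
      = (x b⁻¹ * (α b⁻¹ b : k)) • (θ b).symm v := by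
  rw [Emap, LinearMap.sum_apply, AddSubmonoidClass.coe_finset_sum, Finset.sum_apply]
  rw [Finset.sum_eq_single b⁻¹]
  · simp only [LinearMap.smul_apply, SetLike.val_smul, Pi.smul_apply]
    rw [Rmap_coe, inv_inv, indRep_apply, one_mul, inv_mul_cancel, fV_one]
  · intro a _ ha
    simp only [LinearMap.smul_apply, SetLike.val_smul, Pi.smul_apply]
    rw [Rmap_coe, indRep_apply, one_mul, fV_apply]
    have hmem : ¬ ((ι b)⁻¹ * ι a⁻¹ ∈ N) := by
      rw [mem_N_iff, QuotientGroup.mk_mul, QuotientGroup.mk_inv, mk_iota N hι, mk_iota N hι]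
      intro hc
      apply ha
      rw [inv_mul_eq_one] at hc
      rw [hc, inv_inv]
    rw [dif_neg hmem, map_zero, smul_zero]
  · intro h
    exact absurd (Finset.mem_univ _) h

lemma cent_eval (φ : Module.End k (indCar N ρ))
    (hφ : φ ∈ Subalgebra.centralizer k
      (Set.range (⇑(indRep N ρ)) : Set (Module.End k (indCar N ρ))))
    (f : indCar N ρ) (g : G) :
    ((φ f : indCar N ρ) : G → V) g
      = ((φ (indRep N ρ g⁻¹ f) : indCar N ρ) : G → V) 1 := by
  rw [Subalgebra.mem_centralizer_iff] at hφ
  have hc := hφ (indRep N ρ g⁻¹) ⟨g⁻¹, rfl⟩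
  have h2 : ((indRep N ρ g⁻¹ (φ f) : indCar N ρ) : G → V) 1
      = ((φ (indRep N ρ g⁻¹ f) : indCar N ρ) : G → V) 1 := by
    rw [← Module.End.mul_apply, hc, Module.End.mul_apply]
  rw [indRep_apply, inv_inv, mul_one] at h2
  exact h2

include hι in
lemma cent_ext (φ ψ : Module.End k (indCar N ρ))
    (hφ : φ ∈ Subalgebra.centralizer k
      (Set.range (⇑(indRep N ρ)) : Set (Module.End k (indCar N ρ))))
    (hψ : ψ ∈ Subalgebra.centralizer k
      (Set.range (⇑(indRep N ρ)) : Set (Module.End k (indCar N ρ))))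
    (h : ∀ (b : G ⧸ N) (v : V),
      ((φ (indRep N ρ (ι b) (fV N ρ v)) : indCar N ρ) : G → V) 1
        = ((ψ (indRep N ρ (ι b) (fV N ρ v)) : indCar N ρ) : G → V) 1) :
    φ = ψ := by
  apply LinearMap.ext; intro f
  apply Subtype.ext; funext g
  rw [cent_eval N ρ φ hφ f g, cent_eval N ρ ψ hψ f g]
  have hdec := decompose N ρ hι (indRep N ρ g⁻¹ f)
  rw [hdec, map_sum, map_sum, AddSubmonoidClass.coe_finset_sum,
    AddSubmonoidClass.coe_finset_sum, Finset.sum_apply, Finset.sum_apply]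
  exact Finset.sum_congr rfl (fun b _ => h b _)

/-- `Psi φ b` is `f ↦ φ(ind-basis-function)(1)`. -/
noncomputable def Psi (φ : Module.End k (indCar N ρ)) (b : G ⧸ N) : V →ₗ[k] V :=
  (ev1 N ρ) ∘ₗ φ ∘ₗ (indRep N ρ (ι b)) ∘ₗ (fV N ρ)

lemma Psi_apply (φ : Module.End k (indCar N ρ)) (b : G ⧸ N) (v : V) :
    Psi N ρ ι φ b v = ((φ (indRep N ρ (ι b) (fV N ρ v)) : indCar N ρ) : G → V) 1 := rfl

include hθ' in
lemma Psi_equivariant (φ : Module.End k (indCar N ρ))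
    (hφ : φ ∈ Subalgebra.centralizer k
      (Set.range (⇑(indRep N ρ)) : Set (Module.End k (indCar N ρ))))
    (b : G ⧸ N) (n : N) (v : V) :
    θ b (Psi N ρ ι φ b (ρ n v)) = ρ n (θ b (Psi N ρ ι φ b v)) := by
  have hmem : ι b * ↑n * (ι b)⁻¹ ∈ N := ‹N.Normal›.conj_mem _ n.2 (ι b)
  set m : N := ⟨ι b * ↑n * (ι b)⁻¹, hmem⟩ with hmdef
  have step : Psi N ρ ι φ b (ρ n v) = ρ m (Psi N ρ ι φ b v) := by
    rw [Psi_apply, Psi_apply, fV_rho]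
    have e1 : indRep N ρ (ι b) (indRep N ρ (↑n) (fV N ρ v))
        = indRep N ρ (↑m) (indRep N ρ (ι b) (fV N ρ v)) := by
      rw [← Module.End.mul_apply, ← Module.End.mul_apply, ← map_mul, ← map_mul]
      congr 1
      congr 1
      show ι b * ↑n = ι b * ↑n * (ι b)⁻¹ * ι b
      group
    rw [e1]
    rw [Subalgebra.mem_centralizer_iff] at hφ
    have hc := hφ (indRep N ρ (↑m)) ⟨↑m, rfl⟩
    have e2 : φ (indRep N ρ (↑m) (indRep N ρ (ι b) (fV N ρ v)))
        = indRep N ρ (↑m) (φ (indRep N ρ (ι b) (fV N ρ v))) := by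
      rw [← Module.End.mul_apply, ← hc, Module.End.mul_apply]
    rw [e2, indRep_apply, mul_one]
    set Z := φ (indRep N ρ (ι b) (fV N ρ v))
    have e3 : (↑m)⁻¹ = (1 : G) * ↑(m⁻¹) := by
      rw [one_mul]
      rfl
    rw [e3, indCar_prop, inv_inv]
  rw [step]
  have hmem2 : (ι b)⁻¹ * ↑m * ι b ∈ N := by
    have := ‹N.Normal›.conj_mem _ m.2 (ι b)⁻¹
    simpa using this
  have hth := hθ' b m (Psi N ρ ι φ b v) hmem2
  have em : (⟨(ι b)⁻¹ * ↑m * ι b, hmem2⟩ : N) = n := by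
    apply Subtype.ext
    show (ι b)⁻¹ * (ι b * ↑n * (ι b)⁻¹) * ι b = ↑n
    group
  rw [em] at hth
  exact hth

include hθ' hα' hι hι1 hθ1 in
lemma Emap_mul (hV : Nontrivial V) (x y : (G ⧸ N) → k) :
    Emap N ρ ι θ α hθ' (fun c => ∑ a : G ⧸ N, (α a (a⁻¹ * c) : k) * x a * y (a⁻¹ * c))
      = Emap N ρ ι θ α hθ' y * Emap N ρ ι θ α hθ' x := by
  have main : ∀ a b : G ⧸ N,
      (((α a b : k) * x a * y b * (α (a * b) (a * b)⁻¹ : k)) • Rmap N ρ ι θ hθ' (a * b)⁻¹ :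
        Module.End k (indCar N ρ))
      = ((y b * (α b b⁻¹ : k)) • Rmap N ρ ι θ hθ' b⁻¹)
        * ((x a * (α a a⁻¹ : k)) • Rmap N ρ ι θ hθ' a⁻¹) := by
    intro a b
    rw [smul_mul_assoc, mul_smul_comm, Rmap_comp N ρ ι θ α hθ' hα' hι b⁻¹ a⁻¹,
      smul_smul, smul_smul, show b⁻¹ * a⁻¹ = (a * b)⁻¹ by group]
    congr 1
    have h := key_scalar N ρ ι θ α hθ' hα' hι hι1 hθ1 hV a b
    have hne : (α b⁻¹ a⁻¹ : k) ≠ 0 := Units.ne_zero _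
    field_simp at h ⊢
    linear_combination (x a * y b) * h
  have lhs_eq : Emap N ρ ι θ α hθ'
        (fun c => ∑ a : G ⧸ N, (α a (a⁻¹ * c) : k) * x a * y (a⁻¹ * c))
      = ∑ a : G ⧸ N, ∑ c : G ⧸ N,
          (((α a (a⁻¹ * c) : k) * x a * y (a⁻¹ * c)) * (α c c⁻¹ : k)) •
            Rmap N ρ ι θ hθ' c⁻¹ := by
    rw [Emap, Finset.sum_comm]
    refine Finset.sum_congr rfl (fun c _ => ?_)
    rw [Finset.sum_mul, Finset.sum_smul]
  have rhs_eq : (Emap N ρ ι θ α hθ' y * Emap N ρ ι θ α hθ' x : Module.End k (indCar N ρ))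
      = ∑ a : G ⧸ N, ∑ b : G ⧸ N,
          ((y b * (α b b⁻¹ : k)) • Rmap N ρ ι θ hθ' b⁻¹)
            * ((x a * (α a a⁻¹ : k)) • Rmap N ρ ι θ hθ' a⁻¹) := by
    rw [Emap, Emap, Finset.sum_mul_sum, Finset.sum_comm]
  rw [lhs_eq, rhs_eq]
  refine Finset.sum_congr rfl (fun a _ => ?_)
  refine Fintype.sum_equiv (Equiv.mulLeft a⁻¹) _ _ (fun c => ?_)
  have hc : a * (a⁻¹ * c) = c := by group
  have := main a (a⁻¹ * c)
  rw [hc] at this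
  rw [this]
  rfl

include hθ' hα' hι hι1 hθ1 in
lemma Emap_one [DecidableEq (G ⧸ N)] (hV : Nontrivial V) :
    Emap N ρ ι θ α hθ' (fun c => if c = 1 then 1 else 0) = 1 := by
  rw [Emap, Finset.sum_eq_single 1]
  · rw [if_pos rfl, inv_one, one_mul, alpha_one_left N ρ ι θ α hα' hι hι1 hθ1 hV 1, one_smul,
      Rmap_one N ρ ι θ hθ' hι1 hθ1]
  · intro a _ ha
    rw [if_neg ha, zero_mul, zero_smul]
  · intro h
    exact absurd (Finset.mem_univ _) h

end WithHyps

end CliffordAux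

set_option maxHeartbeats 2000000 in
/-- Let `N ⊴ G` of finite index, `L = (V, ρ)` an irreducible finite-dimensional
`N`-representation over an algebraically closed field with full stabilizer, witnessed by
isomorphisms `θ_a : L ≅ {}^{ι a} L` with associated normalized 2-cocycle `α` and twisted
group algebra `𝒜` (realized as the twisted convolution algebra on `A → k`).  Then
`End_G(Ind_N^G L)` — the centralizer of the image of `G` in `End_k(Ind_N^G L)` — is
isomorphic as a `k`-algebra to `𝒜^op`: there is a `k`-linear bijection
`e : 𝒜 → End_G(Ind_N^G L)` with `e (x ⋆ y) = e y * e x` and `e ρ_1 = 1`. -/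
theorem end_ind_iso_twisted_group_algebra_op {k G V : Type*} [Field k] [IsAlgClosed k]
    [Group G] [AddCommGroup V] [Module k V] [FiniteDimensional k V]
    (N : Subgroup G) [hN : N.Normal] [Fintype (G ⧸ N)] [DecidableEq (G ⧸ N)]
    (ρ : Representation k N V) (hirr : repIrreducible ρ)
    (ι : G ⧸ N → G) (hι : ∀ a, QuotientGroup.mk' N (ι a) = a) (hι1 : ι 1 = 1)
    (θ : G ⧸ N → (V ≃ₗ[k] V)) (hθ1 : θ 1 = LinearEquiv.refl k V)
    (hθ : ∀ (a : G ⧸ N) (n : N) (v : V),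
      θ a (ρ n v) =
        ρ ⟨(ι a)⁻¹ * ↑n * ι a, by simpa using hN.conj_mem _ n.2 (ι a)⁻¹⟩ (θ a v))
    (α : G ⧸ N → G ⧸ N → kˣ)
    (hα : ∀ (a b : G ⧸ N) (v : V),
      ρ ⟨(ι (a * b))⁻¹ * ι a * ι b, by
          rw [← QuotientGroup.eq_one_iff]
          show (QuotientGroup.mk' N) ((ι (a * b))⁻¹ * ι a * ι b) = 1
          simp only [map_mul, map_inv, hι]
          group⟩
        (θ b (θ a v)) = (α a b : k) • θ (a * b) v)
    (mulA : ((G ⧸ N) → k) → ((G ⧸ N) → k) → ((G ⧸ N) → k))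
    (hmulA : ∀ x y c, mulA x y c = ∑ a : G ⧸ N, (α a (a⁻¹ * c) : k) * x a * y (a⁻¹ * c)) :
    ∃ e : ((G ⧸ N) → k) ≃ₗ[k]
        (Subalgebra.centralizer k (Set.range (⇑(indRep N ρ)) :
          Set (Module.End k (indCar N ρ)))),
      (∀ x y, e (mulA x y) = e y * e x) ∧
      e (fun c => if c = 1 then 1 else 0) = 1 := by
  have hV : Nontrivial V := hirr.1
  have hθ' : ∀ (a : G ⧸ N) (n : N) (v : V) (hm : (ι a)⁻¹ * ↑n * ι a ∈ N),
      θ a (ρ n v) = ρ ⟨(ι a)⁻¹ * ↑n * ι a, hm⟩ (θ a v) := fun a n v _ => hθ a n v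
  have hα' : ∀ (a b : G ⧸ N) (v : V) (hm : (ι (a * b))⁻¹ * ι a * ι b ∈ N),
      ρ ⟨(ι (a * b))⁻¹ * ι a * ι b, hm⟩ (θ b (θ a v)) = (α a b : k) • θ (a * b) v :=
    fun a b v _ => hα a b v
  let E : ((G ⧸ N) → k) →ₗ[k]
      (Subalgebra.centralizer k (Set.range (⇑(indRep N ρ)) :
        Set (Module.End k (indCar N ρ)))) := {
    toFun := fun x => ⟨CliffordAux.Emap N ρ ι θ α hθ' x, CliffordAux.Emap_mem N ρ ι θ α hθ' x⟩
    map_add' := fun x y => Subtype.ext (CliffordAux.Emap_add N ρ ι θ α hθ' x y)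
    map_smul' := fun c x => Subtype.ext (CliffordAux.Emap_smul N ρ ι θ α hθ' c x) }
  have hinj : Function.Injective E := by
    rw [injective_iff_map_eq_zero]
    intro x hx
    funext a
    obtain ⟨v, hv⟩ := exists_ne (0 : V)
    have h0 : CliffordAux.Emap N ρ ι θ α hθ' x = 0 := congrArg Subtype.val hx
    have hb := congrArg (fun T : Module.End k (indCar N ρ) =>
      ((T (indRep N ρ (ι a⁻¹) (CliffordAux.fV N ρ v)) : indCar N ρ) : G → V) 1) h0
    simp only [LinearMap.zero_apply, ZeroMemClass.coe_zero, Pi.zero_apply] at hb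
    rw [CliffordAux.Emap_on_basis N ρ ι θ α hθ' hι x a⁻¹ v, inv_inv] at hb
    rcases smul_eq_zero.mp hb with h1 | h1
    · rcases mul_eq_zero.mp h1 with h2 | h2
      · exact h2
      · exact absurd h2 (Units.ne_zero _)
    · exact absurd ((LinearEquiv.map_eq_zero_iff _).mp h1) hv
  have hsurj : Function.Surjective E := by
    rintro ⟨φ, hφ⟩
    have hsch : ∀ b : G ⧸ N, ∃ μ : k, ∀ v,
        ((θ b : V →ₗ[k] V) ∘ₗ CliffordAux.Psi N ρ ι φ b) v = μ • v := by
      intro b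
      refine CliffordAux.schur N ρ hirr ((θ b : V →ₗ[k] V) ∘ₗ CliffordAux.Psi N ρ ι φ b)
        (fun n v => ?_)
      simp only [LinearMap.comp_apply, LinearEquiv.coe_coe]
      exact CliffordAux.Psi_equivariant N ρ ι θ hθ' φ hφ b n v
    choose μ hμ using hsch
    refine ⟨fun a => μ a⁻¹ * ((α a a⁻¹ : k))⁻¹, ?_⟩
    apply Subtype.ext
    show CliffordAux.Emap N ρ ι θ α hθ' _ = φ
    apply CliffordAux.cent_ext N ρ ι hι _ φ (CliffordAux.Emap_mem N ρ ι θ α hθ' _) hφ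
    intro b v
    rw [CliffordAux.Emap_on_basis N ρ ι θ α hθ' hι _ b v]
    rw [← CliffordAux.Psi_apply N ρ ι φ b v]
    have hP : CliffordAux.Psi N ρ ι φ b v = μ b • (θ b).symm v := by
      have h1 := hμ b v
      simp only [LinearMap.comp_apply, LinearEquiv.coe_coe] at h1
      have h2 := congrArg (θ b).symm h1
      rw [LinearEquiv.symm_apply_apply, map_smul] at h2
      exact h2
    rw [hP, inv_inv]
    congr 1
    have hne : (α b⁻¹ b : k) ≠ 0 := Units.ne_zero _
    field_simp
  refine ⟨LinearEquiv.ofBijective E ⟨hinj, hsurj⟩, ?_, ?_⟩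
  · intro x y
    apply Subtype.ext
    show CliffordAux.Emap N ρ ι θ α hθ' (mulA x y)
        = CliffordAux.Emap N ρ ι θ α hθ' y * CliffordAux.Emap N ρ ι θ α hθ' x
    have hx : mulA x y = fun c => ∑ a : G ⧸ N, (α a (a⁻¹ * c) : k) * x a * y (a⁻¹ * c) :=
      funext (hmulA x y)
    rw [hx]
    exact CliffordAux.Emap_mul N ρ ι θ α hθ' hα' hι hι1 hθ1 hV x y
  · apply Subtype.ext
    show CliffordAux.Emap N ρ ι θ α hθ' (fun c => if c = 1 then 1 else 0) = 1
    exact CliffordAux.Emap_one N ρ ι θ α hθ' hα' hι hι1 hθ1 hV
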